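/- Let q ≡ 1 (mod 2) be a prime power and α ∈ F_q^×. The surface in the weighted projective space P(2,1,1,1) over F_q defined by t^2 = α·u·v·w·(u+v+w) has exactly q^2 + (1 + χ(−α))·q + 1 points over F_q, where χ is the quadratic character of F_q. -/

import Mathlib

/-- The scaling relation defining the weighted projective space `ℙ(2,1,1,1)`:
`(t,u,v,w) ~ (λ²t, λu, λv, λw)` for `λ ≠ 0`.  Coordinates are indexed by `Fin 4`,
with index `0` the weight-2 coordinate `t`. -/
def wpRel (F : Type*) [Field F] (x y : {v : Fin 4 → F // v ≠ 0}) : Prop :=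
  ∃ l : F, l ≠ 0 ∧ y.1 0 = l ^ 2 * x.1 0 ∧ y.1 1 = l * x.1 1 ∧
    y.1 2 = l * x.1 2 ∧ y.1 3 = l * x.1 3

/-- The setoid of the scaling relation on nonzero coordinate vectors; its quotient is the set
of points of the weighted projective space `ℙ(2,1,1,1)` over `F`. -/
def wpSetoid (F : Type*) [Field F] : Setoid {v : Fin 4 → F // v ≠ 0} where
  r := wpRel F
  iseqv := by
    constructor
    · intro x; exact ⟨1, one_ne_zero, by simp, by simp, by simp, by simp⟩
    · rintro x y ⟨l, hl, h0, h1, h2, h3⟩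
      exact ⟨l⁻¹, inv_ne_zero hl, by rw [h0]; field_simp, by rw [h1]; field_simp,
        by rw [h2]; field_simp, by rw [h3]; field_simp⟩
    · rintro x y z ⟨l, hl, h0, h1, h2, h3⟩ ⟨l', hl', h0', h1', h2', h3'⟩
      exact ⟨l' * l, mul_ne_zero hl' hl, by rw [h0', h0]; ring, by rw [h1', h1]; ring,
        by rw [h2', h2]; ring, by rw [h3', h3]; ring⟩

open Finset

section CharSums

variable {F : Type*} [Field F] [Fintype F] [DecidableEq F]

private lemma qc_sum_sq : ∑ w : F, quadraticChar F (w * w) = (Fintype.card F : ℤ) - 1 := by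
  have h : ∀ w : F, quadraticChar F (w * w) = if w = 0 then 0 else 1 := by
    intro w
    split
    · simp [*]
    · rw [← sq]; exact quadraticChar_sq_one' ‹_›
  simp_rw [h]
  rw [Finset.sum_ite, Finset.sum_const, Finset.sum_const, Finset.filter_eq', if_pos (mem_univ 0),
    Finset.filter_ne']
  simp [Finset.card_erase_of_mem]
  rw [Nat.cast_sub Fintype.card_pos, Nat.cast_one]

private lemma qc_sum_shift (hF : ringChar F ≠ 2) {s : F} (hs : s ≠ 0) :
    ∑ w : F, quadraticChar F (w * (w + s)) = -1 := by
  rw [← Finset.sum_erase (f := fun w : F => quadraticChar F (w * (w + s))) univ (a := 0)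
    (by simp)]
  rw [Finset.sum_nbij' (i := fun w => 1 + s * w⁻¹) (j := fun y => s * (y - 1)⁻¹)
    (t := univ.erase 1) (g := fun y => quadraticChar F y)
    (hi := by
      intro a ha
      simp only [mem_erase, mem_univ, and_true] at ha ⊢
      intro h
      have h' : s * a⁻¹ = 0 := by linear_combination h
      rcases mul_eq_zero.mp h' with h'' | h''
      · exact hs h''
      · exact ha (by simpa using (inv_eq_zero.mp h'')))
    (hj := by
      intro a ha
      simp only [mem_erase, mem_univ, and_true] at ha ⊢
      intro h
      rcases mul_eq_zero.mp h with h'' | h''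
      · exact hs h''
      · exact ha (by have := inv_eq_zero.mp h''; linear_combination this))
    (left_neg := by
      intro a ha
      simp only [mem_erase, mem_univ, and_true] at ha
      field_simp
      rw [add_sub_cancel_left, div_self hs])
    (right_neg := by
      intro a ha
      simp only [mem_erase, mem_univ, and_true] at ha
      have : a - 1 ≠ 0 := sub_ne_zero.mpr ha
      field_simp
      ring)
    (h := by
      intro a ha
      simp only [mem_erase, mem_univ, and_true] at ha
      have : a * (a + s) = a ^ 2 * (1 + s * a⁻¹) := by field_simp
      rw [this, map_mul, quadraticChar_sq_one' ha, one_mul])]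
  rw [Finset.sum_erase_eq_sub (mem_univ 1), quadraticChar_sum_zero hF]
  simp

private lemma qc_triple_sum (hF : ringChar F ≠ 2) (a : F) :
    ∑ u : F, ∑ v : F, ∑ w : F, quadraticChar F (a * u * v * w * (u + v + w)) =
      quadraticChar F (-a) * ((Fintype.card F : ℤ) * ((Fintype.card F : ℤ) - 1)) := by
  have hinner : ∀ u v : F, ∑ w : F, quadraticChar F (a * u * v * w * (u + v + w)) =
      quadraticChar F (a * u * v) * (if u + v = 0 then (Fintype.card F : ℤ) - 1 else -1) := by
    intro u v
    have h : ∀ w : F, quadraticChar F (a * u * v * w * (u + v + w)) =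
        quadraticChar F (a * u * v) * quadraticChar F (w * (w + (u + v))) := by
      intro w
      rw [show a * u * v * w * (u + v + w) = (a * u * v) * (w * (w + (u + v))) by ring, map_mul]
    simp_rw [h, ← Finset.mul_sum]
    congr 1
    split
    · rename_i h0
      simp_rw [h0, add_zero]
      simpa using qc_sum_sq (F := F)
    · exact qc_sum_shift hF ‹_›
  simp_rw [hinner]
  have hsplit : ∀ u v : F, quadraticChar F (a * u * v) *
        (if u + v = 0 then (Fintype.card F : ℤ) - 1 else -1) =
      (if v = -u then quadraticChar F (a * u * v) * (Fintype.card F : ℤ) else 0) -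
        quadraticChar F (a * u) * quadraticChar F v := by
    intro u v
    have hm : a * u * v = (a * u) * v := by ring
    by_cases h : v = -u
    · have h0 : u + v = 0 := by rw [h]; ring
      rw [if_pos h0, if_pos h, hm, map_mul]; ring
    · have h0 : ¬ u + v = 0 := fun hc => h (by linear_combination hc)
      rw [if_neg h0, if_neg h, hm, map_mul]; ring
  simp_rw [hsplit, Finset.sum_sub_distrib, Finset.sum_ite_eq' univ, mem_univ, if_true,
    ← Finset.mul_sum, quadraticChar_sum_zero hF, mul_zero, Finset.sum_const, card_univ,
    smul_zero, sub_zero]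
  have h2 : ∀ u : F, quadraticChar F (a * u * -u) * (Fintype.card F : ℤ) =
      (quadraticChar F (-a) * (Fintype.card F : ℤ)) * quadraticChar F (u * u) := by
    intro u
    have : a * u * -u = (-a) * (u * u) := by ring
    rw [this, map_mul]; ring
  simp_rw [h2, ← Finset.mul_sum, qc_sum_sq (F := F)]
  ring

private lemma card_sqrt (hF : ringChar F ≠ 2) (c : F) :
    (Nat.card {t : F // t ^ 2 = c} : ℤ) = quadraticChar F c + 1 := by
  have h := quadraticChar_card_sqrts hF c
  rw [← h, Set.toFinset_card]
  norm_cast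
  exact Nat.card_eq_fintype_card

private lemma card_aff (hF : ringChar F ≠ 2) (a : F) :
    (Nat.card {x : Fin 4 → F // x 0 ^ 2 = a * x 1 * x 2 * x 3 * (x 1 + x 2 + x 3)} : ℤ)
      = (Fintype.card F : ℤ) ^ 3 +
        quadraticChar F (-a) * ((Fintype.card F : ℤ) * ((Fintype.card F : ℤ) - 1)) := by
  classical
  have e1 : {x : Fin 4 → F // x 0 ^ 2 = a * x 1 * x 2 * x 3 * (x 1 + x 2 + x 3)} ≃
      {y : (F × F × F) × F //
        y.2 ^ 2 = a * y.1.1 * y.1.2.1 * y.1.2.2 * (y.1.1 + y.1.2.1 + y.1.2.2)} :=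
    { toFun := fun x => ⟨((x.1 1, x.1 2, x.1 3), x.1 0), x.2⟩
      invFun := fun y => ⟨![y.1.2, y.1.1.1, y.1.1.2.1, y.1.1.2.2], by
        simpa using y.2⟩
      left_inv := fun x => by
        apply Subtype.ext
        funext i
        fin_cases i <;> rfl
      right_inv := fun y => by apply Subtype.ext; rfl }
  have e2 := e1.trans (Equiv.subtypeProdEquivSigmaSubtype
    (fun (c : F × F × F) (t : F) => t ^ 2 = a * c.1 * c.2.1 * c.2.2 * (c.1 + c.2.1 + c.2.2)))
  rw [Nat.card_congr e2, Nat.card_eq_fintype_card, Fintype.card_sigma]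
  push_cast
  have h : ∀ c : F × F × F,
      ((Fintype.card {t : F // t ^ 2 = a * c.1 * c.2.1 * c.2.2 * (c.1 + c.2.1 + c.2.2)} : ℕ) : ℤ)
      = quadraticChar F (a * c.1 * c.2.1 * c.2.2 * (c.1 + c.2.1 + c.2.2)) + 1 :=
    fun c => by rw [← Nat.card_eq_fintype_card]; exact card_sqrt hF _
  rw [Finset.sum_congr rfl (fun c _ => h c), Finset.sum_add_distrib, Finset.sum_const]
  rw [Fintype.sum_prod_type]
  simp_rw [Fintype.sum_prod_type]
  rw [qc_triple_sum hF a]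
  simp [Fintype.card_prod]
  ring

end CharSums

section Proj
variable {F : Type*} [Field F]

private lemma eqn_invariant {a : F} {x y : {v : Fin 4 → F // v ≠ 0}} (h : wpRel F x y)
    (hx : x.1 0 ^ 2 = a * x.1 1 * x.1 2 * x.1 3 * (x.1 1 + x.1 2 + x.1 3)) :
    y.1 0 ^ 2 = a * y.1 1 * y.1 2 * y.1 3 * (y.1 1 + y.1 2 + y.1 3) := by
  obtain ⟨l, hl, h0, h1, h2, h3⟩ := h
  rw [h0, h1, h2, h3]
  linear_combination (l : F) ^ 4 * hx

private lemma exists_coord {a : F} {x : {v : Fin 4 → F // v ≠ 0}}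
    (hx : x.1 0 ^ 2 = a * x.1 1 * x.1 2 * x.1 3 * (x.1 1 + x.1 2 + x.1 3)) :
    x.1 1 ≠ 0 ∨ x.1 2 ≠ 0 ∨ x.1 3 ≠ 0 := by
  by_contra h
  push_neg at h
  obtain ⟨h1, h2, h3⟩ := h
  have h0 : x.1 0 = 0 := by
    have := hx
    rw [h1, h2, h3] at this
    simpa [pow_eq_zero_iff] using this
  exact x.2 (funext fun i => by fin_cases i <;> assumption)

private lemma card_eq_mul_of_fibers {A B : Type*} [Finite A] [Finite B] (f : A → B) (k : ℕ)
    (h : ∀ b : B, Nat.card {a : A // f a = b} = k) :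
    Nat.card A = k * Nat.card B := by
  classical
  have : Fintype A := Fintype.ofFinite A
  have : Fintype B := Fintype.ofFinite B
  rw [Nat.card_eq_fintype_card, Nat.card_eq_fintype_card, ← Finset.card_univ (α := A),
    Finset.card_eq_sum_card_fiberwise (fun a _ => Finset.mem_univ (f a))]
  have h2 : ∀ b : B, (univ.filter fun a => f a = b).card = k := by
    intro b
    rw [← h b, Nat.card_eq_fintype_card, Fintype.card_subtype]
  rw [Finset.sum_congr rfl (fun b _ => h2 b), Finset.sum_const, Finset.card_univ, smul_eq_mul,
    mul_comm]

variable [Fintype F]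

private lemma card_proj_mul (a : F) :
    Nat.card {x : {v : Fin 4 → F // v ≠ 0} //
        x.1 0 ^ 2 = a * x.1 1 * x.1 2 * x.1 3 * (x.1 1 + x.1 2 + x.1 3)} =
      (Fintype.card F - 1) * Nat.card {P : Quotient (wpSetoid F) //
        ∀ x : {v : Fin 4 → F // v ≠ 0}, Quotient.mk (wpSetoid F) x = P →
          (x.1 0) ^ 2 = a * x.1 1 * x.1 2 * x.1 3 * (x.1 1 + x.1 2 + x.1 3)} := by
  classical
  set A := {x : {v : Fin 4 → F // v ≠ 0} //
      x.1 0 ^ 2 = a * x.1 1 * x.1 2 * x.1 3 * (x.1 1 + x.1 2 + x.1 3)} with hA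
  set PS := {P : Quotient (wpSetoid F) //
      ∀ x : {v : Fin 4 → F // v ≠ 0}, Quotient.mk (wpSetoid F) x = P →
        (x.1 0) ^ 2 = a * x.1 1 * x.1 2 * x.1 3 * (x.1 1 + x.1 2 + x.1 3)} with hPS
  let π : A → PS := fun x => ⟨Quotient.mk (wpSetoid F) x.1, fun y hy =>
    eqn_invariant ((wpSetoid F).iseqv.symm (Quotient.exact hy)) x.2⟩
  apply card_eq_mul_of_fibers π
  rintro ⟨Pt, hPt⟩
  obtain ⟨x, rfl⟩ := Quotient.exists_rep Pt
  have hx : x.1 0 ^ 2 = a * x.1 1 * x.1 2 * x.1 3 * (x.1 1 + x.1 2 + x.1 3) := hPt x rfl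
  have hco := exists_coord hx
  set vec : Fˣ → (Fin 4 → F) := fun l =>
    ![(l : F) ^ 2 * x.1 0, (l : F) * x.1 1, (l : F) * x.1 2, (l : F) * x.1 3] with hvec
  have hv0 : ∀ l, vec l 0 = (l : F) ^ 2 * x.1 0 := fun l => rfl
  have hv1 : ∀ l, vec l 1 = (l : F) * x.1 1 := fun l => rfl
  have hv2 : ∀ l, vec l 2 = (l : F) * x.1 2 := fun l => rfl
  have hv3 : ∀ l, vec l 3 = (l : F) * x.1 3 := fun l => rfl
  have hscale : ∀ l : Fˣ, vec l ≠ 0 := by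
    intro l h
    rcases hco with hc | hc | hc
    · have e := congrFun h 1
      rw [hv1 l] at e
      rcases mul_eq_zero.mp e with e' | e'
      · exact l.ne_zero e'
      · exact hc e'
    · have e := congrFun h 2
      rw [hv2 l] at e
      rcases mul_eq_zero.mp e with e' | e'
      · exact l.ne_zero e'
      · exact hc e'
    · have e := congrFun h 3
      rw [hv3 l] at e
      rcases mul_eq_zero.mp e with e' | e'
      · exact l.ne_zero e'
      · exact hc e'
  have hPvec : ∀ l : Fˣ,
      vec l 0 ^ 2 = a * vec l 1 * vec l 2 * vec l 3 * (vec l 1 + vec l 2 + vec l 3) := by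
    intro l
    rw [hv0, hv1, hv2, hv3]
    linear_combination ((l : F)) ^ 4 * hx
  have hrel : ∀ l : Fˣ, wpRel F x ⟨vec l, hscale l⟩ := fun l =>
    ⟨(l : F), l.ne_zero, hv0 l, hv1 l, hv2 l, hv3 l⟩
  let φ : Fˣ → {p : A // π p = ⟨Quotient.mk (wpSetoid F) x, hPt⟩} := fun l =>
    ⟨⟨⟨vec l, hscale l⟩, hPvec l⟩, by
      apply Subtype.ext
      show Quotient.mk (wpSetoid F) ⟨vec l, hscale l⟩ = Quotient.mk (wpSetoid F) x
      exact (Quotient.sound (s := wpSetoid F) (hrel l)).symm⟩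
  have hbij : Function.Bijective φ := by
    constructor
    · intro l m h
      have hv : vec l = vec m := congrArg (fun p => p.1.1.1) h
      apply Units.ext
      rcases hco with hc | hc | hc
      · have e := congrFun hv 1
        rw [hv1 l, hv1 m] at e
        exact mul_right_cancel₀ hc e
      · have e := congrFun hv 2
        rw [hv2 l, hv2 m] at e
        exact mul_right_cancel₀ hc e
      · have e := congrFun hv 3
        rw [hv3 l, hv3 m] at e
        exact mul_right_cancel₀ hc e
    · rintro ⟨⟨⟨y, hy0⟩, hyP⟩, hyπ⟩
      have hmk : Quotient.mk (wpSetoid F) ⟨y, hy0⟩ = Quotient.mk (wpSetoid F) x :=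
        congrArg Subtype.val hyπ
      obtain ⟨l, hl, h0, h1, h2, h3⟩ :=
        (wpSetoid F).iseqv.symm (Quotient.exact (s := wpSetoid F) hmk)
      refine ⟨Units.mk0 l hl, ?_⟩
      apply Subtype.ext
      apply Subtype.ext
      apply Subtype.ext
      show vec (Units.mk0 l hl) = y
      funext i
      fin_cases i
      · rw [show ((⟨0, by norm_num⟩ : Fin 4)) = (0 : Fin 4) from rfl, hv0]
        simpa using h0.symm
      · rw [show ((⟨1, by norm_num⟩ : Fin 4)) = (1 : Fin 4) from rfl, hv1]
        simpa using h1.symm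
      · rw [show ((⟨2, by norm_num⟩ : Fin 4)) = (2 : Fin 4) from rfl, hv2]
        simpa using h2.symm
      · rw [show ((⟨3, by norm_num⟩ : Fin 4)) = (3 : Fin 4) from rfl, hv3]
        simpa using h3.symm
  rw [← Nat.card_eq_of_bijective φ hbij, Nat.card_eq_fintype_card, Fintype.card_units]

private lemma card_nonzero (a : F) (ha : a ≠ 0) :
    (Nat.card {x : {v : Fin 4 → F // v ≠ 0} //
        x.1 0 ^ 2 = a * x.1 1 * x.1 2 * x.1 3 * (x.1 1 + x.1 2 + x.1 3)} : ℤ) + 1 =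
      Nat.card {x : Fin 4 → F // x 0 ^ 2 = a * x 1 * x 2 * x 3 * (x 1 + x 2 + x 3)} := by
  classical
  have e : {x : {v : Fin 4 → F // v ≠ 0} //
      x.1 0 ^ 2 = a * x.1 1 * x.1 2 * x.1 3 * (x.1 1 + x.1 2 + x.1 3)} ≃
      {x : Fin 4 → F //
        (x 0 ^ 2 = a * x 1 * x 2 * x 3 * (x 1 + x 2 + x 3)) ∧ x ≠ 0} :=
    { toFun := fun p => ⟨p.1.1, p.2, p.1.2⟩
      invFun := fun p => ⟨⟨p.1, p.2.2⟩, p.2.1⟩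
      left_inv := fun p => rfl
      right_inv := fun p => rfl }
  rw [Nat.card_congr e, Nat.card_eq_fintype_card, Nat.card_eq_fintype_card,
    Fintype.card_subtype, Fintype.card_subtype]
  norm_cast
  rw [← Finset.filter_filter]
  have hsplit := Finset.card_filter_add_card_filter_not
    (s := univ.filter fun x : Fin 4 → F => x 0 ^ 2 = a * x 1 * x 2 * x 3 * (x 1 + x 2 + x 3))
    (p := fun x => x ≠ 0)
  simp only [not_not] at hsplit
  have hz : ((univ.filter fun x : Fin 4 → F =>
      x 0 ^ 2 = a * x 1 * x 2 * x 3 * (x 1 + x 2 + x 3)).filter fun x => x = 0) = {0} := by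
    ext z
    simp only [mem_filter, mem_univ, true_and, Finset.mem_singleton]
    constructor
    · rintro ⟨_, h⟩; exact h
    · rintro rfl
      refine ⟨?_, rfl⟩
      simp
  rw [hz, Finset.card_singleton] at hsplit
  exact hsplit

end Proj


open scoped Classical in
/-- for `q` odd and `α ∈ F_q^×`, the surface `t² = α·u·v·w·(u+v+w)` in the
weighted projective space `ℙ(2,1,1,1)` over `F_q` has exactly `q² + (1 + χ(−α))·q + 1`
points, where `χ` is the quadratic character. -/
theorem stmt10 {F : Type*} [Field F] [Fintype F] (hodd : Odd (Fintype.card F))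
    (α : F) (hα : α ≠ 0) :
    (Nat.card {P : Quotient (wpSetoid F) //
        ∀ x : {v : Fin 4 → F // v ≠ 0}, Quotient.mk (wpSetoid F) x = P →
          (x.1 0) ^ 2 = α * x.1 1 * x.1 2 * x.1 3 * (x.1 1 + x.1 2 + x.1 3)} : ℤ) =
      (Fintype.card F : ℤ) ^ 2 +
        (1 + (if IsSquare (-α) then (1 : ℤ) else -1)) * (Fintype.card F : ℤ) + 1 := by
  classical
  have hF2 : ringChar F ≠ 2 := by
    intro h
    have h2 := FiniteField.even_card_of_char_two h
    rw [Nat.odd_iff] at hodd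
    omega
  have hmul := card_proj_mul (F := F) α
  have hnz := card_nonzero (F := F) α hα
  have haff := card_aff (F := F) hF2 α
  set q : ℤ := (Fintype.card F : ℤ) with hq
  set N : ℤ := (Nat.card {P : Quotient (wpSetoid F) //
      ∀ x : {v : Fin 4 → F // v ≠ 0}, Quotient.mk (wpSetoid F) x = P →
        (x.1 0) ^ 2 = α * x.1 1 * x.1 2 * x.1 3 * (x.1 1 + x.1 2 + x.1 3)} : ℤ) with hN
  set e : ℤ := (quadraticChar F (-α) : ℤ) with he
  have hite : (if IsSquare (-α) then (1 : ℤ) else -1) = e := by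
    rw [he]
    split
    · exact ((quadraticChar_one_iff_isSquare (neg_ne_zero.mpr hα)).mpr ‹_›).symm
    · exact (quadraticChar_neg_one_iff_not_isSquare.mpr ‹_›).symm
  rw [hite]
  have hcast : ((Fintype.card F - 1 : ℕ) : ℤ) = q - 1 := by
    rw [Nat.cast_sub Fintype.card_pos, Nat.cast_one, hq]
  have hmain : (q - 1) * N + 1 = q ^ 3 + e * (q * (q - 1)) := by
    have h1 : (Nat.card {x : {v : Fin 4 → F // v ≠ 0} //
        x.1 0 ^ 2 = α * x.1 1 * x.1 2 * x.1 3 * (x.1 1 + x.1 2 + x.1 3)} : ℤ) = (q - 1) * N := by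
      rw [hmul]
      push_cast [hcast]
      rw [← hN]
    rw [← h1, hnz, haff]
  have hq1 : q - 1 ≠ 0 := by
    have : (1 : ℤ) < q := by
      rw [hq]
      exact_mod_cast Fintype.one_lt_card
    have h2 : (0:ℤ) < q - 1 := by linarith
    exact ne_of_gt h2
  apply mul_left_cancel₀ hq1
  linear_combination hmain
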